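/- Let γ(x), x ∈ X, be i.i.d. zero-mean Gumbel random variables over a finite set X, θ : X → ℝ, and let x* = argmax_{x∈X} {θ(x) + γ(x)} (almost surely unique). Then the entropy of the Gibbs distribution p(x) = exp(θ(x))/Z(θ) satisfies H(p) = E[γ(x*)], the expected value of the maximizing perturbation. -/

import Mathlib

open MeasureTheory Real Set Filter
open scoped ENNReal NNReal

/-- Density of the zero-mean Gumbel distribution, whose CDF is `exp (-exp (-(t + c)))`. -/
noncomputable def gumbelPDF (t : ℝ) : ℝ :=
  Real.exp (-(t + Real.eulerMascheroniConstant)) *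
    Real.exp (-Real.exp (-(t + Real.eulerMascheroniConstant)))

/-- The zero-mean Gumbel measure on `ℝ`. -/
noncomputable def gumbel : Measure ℝ :=
  MeasureTheory.volume.withDensity fun t => ENNReal.ofReal (gumbelPDF t)

local notation "γ₀" => Real.eulerMascheroniConstant

lemma integrableOn_log_mul_exp_neg :
    IntegrableOn (fun t : ℝ => Real.log t * Real.exp (-t)) (Ioi 0) := by
  have h1 : IntegrableOn (fun t : ℝ => t ^ (-(2:ℝ)⁻¹) * Real.exp (-t ^ (1:ℝ))) (Ioi (0:ℝ)) :=
    integrableOn_rpow_mul_exp_neg_rpow (by norm_num) one_pos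
  have h2 : IntegrableOn (fun t : ℝ => t ^ (1:ℝ) * Real.exp (-t ^ (1:ℝ))) (Ioi (0:ℝ)) :=
    integrableOn_rpow_mul_exp_neg_rpow (by norm_num) one_pos
  have hb : IntegrableOn
      (fun t : ℝ => 2 * (t ^ (-(2:ℝ)⁻¹) * Real.exp (-t ^ (1:ℝ))) + t ^ (1:ℝ) * Real.exp (-t ^ (1:ℝ)))
      (Ioi (0:ℝ)) := (h1.const_mul 2).add h2
  refine Integrable.mono' hb ?_ ?_
  · exact (Real.measurable_log.mul (by fun_prop)).aestronglyMeasurable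
  · filter_upwards [self_mem_ae_restrict measurableSet_Ioi] with t ht
    have ht0 : (0:ℝ) < t := ht
    rw [Real.norm_eq_abs, abs_mul, abs_of_pos (exp_pos _), rpow_one]
    have key : |Real.log t| ≤ 2 * t ^ (-(2:ℝ)⁻¹) + t := by
      rcases le_total t 1 with h | h
      · have hlog : Real.log t ≤ 0 := Real.log_nonpos ht0.le h
        rw [abs_of_nonpos hlog]
        have : -Real.log t = 2 * Real.log (Real.sqrt t⁻¹) := by
          rw [Real.log_sqrt (by positivity), Real.log_inv]; ring
        rw [this]
        have h1 : Real.log (Real.sqrt t⁻¹) ≤ Real.sqrt t⁻¹ - 1 :=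
          Real.log_le_sub_one_of_pos (by positivity)
        have h2 : Real.sqrt t⁻¹ = t ^ (-(2:ℝ)⁻¹) := by
          rw [Real.sqrt_eq_rpow, ← Real.rpow_neg_one t, ← Real.rpow_mul ht0.le]
          norm_num
        nlinarith [Real.sqrt_nonneg t⁻¹, ht0.le]
      · rw [abs_of_nonneg (Real.log_nonneg h)]
        have := Real.log_le_sub_one_of_pos ht0
        have : (0:ℝ) ≤ 2 * t ^ (-(2:ℝ)⁻¹) := by positivity
        linarith [Real.log_le_sub_one_of_pos ht0]
    calc |Real.log t| * Real.exp (-t) ≤ (2 * t ^ (-(2:ℝ)⁻¹) + t) * Real.exp (-t) := by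
          exact mul_le_mul_of_nonneg_right key (exp_pos _).le
      _ = 2 * (t ^ (-(2:ℝ)⁻¹) * Real.exp (-t)) + t * Real.exp (-t) := by ring

lemma integral_log_mul_exp_neg :
    ∫ t in Ioi (0:ℝ), Real.log t * Real.exp (-t) = -γ₀ := by
  -- derivative of the complex Gamma integral at 1
  have h1 := Complex.hasDerivAt_GammaIntegral (s := 1) (by norm_num)
  have hI : (∫ t in Ioi (0:ℝ), (t:ℂ) ^ ((1:ℂ) - 1) * ((Real.log t : ℂ) * (Real.exp (-t) : ℂ)))
      = ((∫ t in Ioi (0:ℝ), Real.log t * Real.exp (-t) : ℝ) : ℂ) := by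
    rw [show (∫ t in Ioi (0:ℝ), (t:ℂ) ^ ((1:ℂ) - 1) * ((Real.log t : ℂ) * (Real.exp (-t) : ℂ)))
        = ∫ t in Ioi (0:ℝ), ((Real.log t * Real.exp (-t) : ℝ) : ℂ) from
      setIntegral_congr_fun measurableSet_Ioi fun t ht => by simp]
    exact integral_ofReal
  rw [hI] at h1
  -- Gamma agrees with GammaIntegral near 1
  have h2 : Complex.GammaIntegral =ᶠ[nhds (1:ℂ)] Complex.Gamma := by
    have : IsOpen {z : ℂ | 0 < z.re} := isOpen_lt continuous_const Complex.continuous_re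
    filter_upwards [this.mem_nhds (by norm_num : (0:ℝ) < (1:ℂ).re)] with z hz
    exact (Complex.Gamma_eq_integral hz).symm
  have h3 : HasDerivAt Complex.Gamma
      ((∫ t in Ioi (0:ℝ), Real.log t * Real.exp (-t) : ℝ) : ℂ) 1 :=
    h1.congr_of_eventuallyEq h2.symm
  have h3' : HasDerivAt Complex.Gamma
      ((∫ t in Ioi (0:ℝ), Real.log t * Real.exp (-t) : ℝ) : ℂ) ((1:ℝ):ℂ) := by
    simpa using h3
  have h4 := h3'.real_of_complex
  have h5 : HasDerivAt Real.Gamma (∫ t in Ioi (0:ℝ), Real.log t * Real.exp (-t)) 1 := by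
    simpa [Complex.Gamma_ofReal] using h4
  have := Real.hasDerivAt_Gamma_one
  exact h5.unique this

section subst
variable {a : ℝ}

lemma hasDeriv_aexp (a : ℝ) (t : ℝ) :
    HasDerivAt (fun t : ℝ => a * Real.exp (-t)) (-(a * Real.exp (-t))) t := by
  simpa [mul_comm] using ((Real.hasDerivAt_exp (-t)).comp t (hasDerivAt_neg t)).const_mul a

lemma inj_aexp (ha : 0 < a) : InjOn (fun t : ℝ => a * Real.exp (-t)) univ := by
  intro s _ t _ h
  simp only at h
  have := mul_left_cancel₀ ha.ne' h
  have := Real.exp_injective this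
  linarith [neg_injective this]

lemma image_aexp (ha : 0 < a) : (fun t : ℝ => a * Real.exp (-t)) '' univ = Ioi 0 := by
  apply Subset.antisymm
  · rintro u ⟨t, -, rfl⟩; exact mul_pos ha (exp_pos _)
  · rintro u hu
    exact ⟨-Real.log (u / a), mem_univ _, by
      simp only [neg_neg, Real.exp_log (div_pos hu ha)]
      field_simp⟩

lemma subst_integral (ha : 0 < a) (g : ℝ → ℝ) :
    ∫ u in Ioi (0:ℝ), g u = ∫ t : ℝ, (a * Real.exp (-t)) * g (a * Real.exp (-t)) := by
  have := integral_image_eq_integral_abs_deriv_smul (f := fun t : ℝ => a * Real.exp (-t))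
    (f' := fun t : ℝ => -(a * Real.exp (-t))) MeasurableSet.univ
    (fun t _ => (hasDeriv_aexp a t).hasDerivWithinAt) (inj_aexp ha) g
  rw [image_aexp ha] at this
  rw [this, Measure.restrict_univ]
  congr 1
  funext t
  simp only [abs_neg, smul_eq_mul]
  rw [abs_of_pos (mul_pos ha (exp_pos _))]

lemma subst_integrable (ha : 0 < a) (g : ℝ → ℝ) (hg : IntegrableOn g (Ioi (0:ℝ))) :
    Integrable (fun t : ℝ => (a * Real.exp (-t)) * g (a * Real.exp (-t))) := by
  have := (integrableOn_image_iff_integrableOn_abs_deriv_smul (f := fun t : ℝ => a * Real.exp (-t))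
    (f' := fun t : ℝ => -(a * Real.exp (-t))) MeasurableSet.univ
    (fun t _ => (hasDeriv_aexp a t).hasDerivWithinAt) (inj_aexp ha) g)
  rw [image_aexp ha] at this
  have h2 := this.mp hg
  rw [← integrableOn_univ]
  refine IntegrableOn.congr_fun h2 (fun t _ => ?_) MeasurableSet.univ
  simp only [abs_neg, smul_eq_mul]
  rw [abs_of_pos (mul_pos ha (exp_pos _))]

lemma integrableOn_exp_neg : IntegrableOn (fun u : ℝ => Real.exp (-u)) (Ioi (0:ℝ)) := by
  simpa using exp_neg_integrableOn_Ioi 0 one_pos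

lemma J0_integrable (ha : 0 < a) :
    Integrable (fun t : ℝ => Real.exp (-t) * Real.exp (-(a * Real.exp (-t)))) := by
  have := subst_integrable ha (fun u => Real.exp (-u) / a) (integrableOn_exp_neg.div_const a)
  refine this.congr (Eventually.of_forall fun t => ?_)
  field_simp

lemma J0 (ha : 0 < a) :
    ∫ t : ℝ, Real.exp (-t) * Real.exp (-(a * Real.exp (-t))) = 1 / a := by
  have h := subst_integral ha (fun u => Real.exp (-u) / a)
  calc ∫ t : ℝ, Real.exp (-t) * Real.exp (-(a * Real.exp (-t)))
      = ∫ t : ℝ, (a * Real.exp (-t)) * (Real.exp (-(a * Real.exp (-t))) / a) := by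
        congr 1; funext t; field_simp
    _ = ∫ u in Ioi (0:ℝ), Real.exp (-u) / a := h.symm
    _ = 1 / a := by rw [integral_div, integral_exp_neg_Ioi_zero]

lemma J1_integrand_eq (ha : 0 < a) (t : ℝ) :
    (a * Real.exp (-t)) * (((Real.log a - Real.log (a * Real.exp (-t))) *
        Real.exp (-(a * Real.exp (-t)))) / a)
      = t * (Real.exp (-t) * Real.exp (-(a * Real.exp (-t)))) := by
  rw [Real.log_mul ha.ne' (exp_pos _).ne', Real.log_exp]
  field_simp
  ring

lemma J1_integrable (ha : 0 < a) :
    Integrable (fun t : ℝ => t * (Real.exp (-t) * Real.exp (-(a * Real.exp (-t))))) := by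
  have hg : IntegrableOn (fun u : ℝ => ((Real.log a - Real.log u) * Real.exp (-u)) / a)
      (Ioi (0:ℝ)) := by
    have : IntegrableOn (fun u : ℝ => Real.log a * Real.exp (-u) - Real.log u * Real.exp (-u))
        (Ioi (0:ℝ)) := (integrableOn_exp_neg.const_mul _).sub integrableOn_log_mul_exp_neg
    refine IntegrableOn.congr_fun (this.div_const a) (fun u _ => by ring) measurableSet_Ioi
  have := subst_integrable ha _ hg
  exact this.congr (Eventually.of_forall fun t => J1_integrand_eq ha t)

lemma J1 (ha : 0 < a) :
    ∫ t : ℝ, t * (Real.exp (-t) * Real.exp (-(a * Real.exp (-t)))) = (Real.log a + γ₀) / a := by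
  have h := subst_integral ha (fun u => ((Real.log a - Real.log u) * Real.exp (-u)) / a)
  have hval : ∫ u in Ioi (0:ℝ), ((Real.log a - Real.log u) * Real.exp (-u)) / a
      = (Real.log a + γ₀) / a := by
    rw [integral_div]
    congr 1
    have : ∀ u : ℝ, (Real.log a - Real.log u) * Real.exp (-u)
        = Real.log a * Real.exp (-u) - Real.log u * Real.exp (-u) := fun u => by ring
    rw [setIntegral_congr_fun measurableSet_Ioi (fun u _ => this u),
      integral_sub (integrableOn_exp_neg.const_mul _) integrableOn_log_mul_exp_neg,
      integral_const_mul, integral_exp_neg_Ioi_zero, integral_log_mul_exp_neg]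
    ring
  calc ∫ t : ℝ, t * (Real.exp (-t) * Real.exp (-(a * Real.exp (-t))))
      = ∫ t : ℝ, (a * Real.exp (-t)) * (((Real.log a - Real.log (a * Real.exp (-t))) *
          Real.exp (-(a * Real.exp (-t)))) / a) := by
        congr 1; funext t; rw [J1_integrand_eq ha t]
    _ = ∫ u in Ioi (0:ℝ), ((Real.log a - Real.log u) * Real.exp (-u)) / a := h.symm
    _ = (Real.log a + γ₀) / a := hval

lemma gumbelPDF_nonneg (t : ℝ) : 0 ≤ gumbelPDF t :=
  mul_nonneg (exp_pos _).le (exp_pos _).le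

lemma gumbelPDF_eq (t : ℝ) :
    gumbelPDF t = Real.exp (-(t + γ₀)) * Real.exp (-(1 * Real.exp (-(t + γ₀)))) := by
  simp [gumbelPDF]

lemma measurable_gumbelPDF : Measurable gumbelPDF := by
  unfold gumbelPDF; fun_prop

lemma continuous_gumbelPDF : Continuous gumbelPDF := by
  unfold gumbelPDF; fun_prop

lemma integrable_gumbelPDF : Integrable gumbelPDF := by
  have := (J0_integrable one_pos).comp_add_right γ₀
  refine this.congr (Eventually.of_forall fun t => ?_)
  rw [gumbelPDF_eq]

lemma integral_gumbelPDF : ∫ t, gumbelPDF t = 1 := by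
  have : ∫ t, gumbelPDF t
      = ∫ t : ℝ, Real.exp (-(t + γ₀)) * Real.exp (-(1 * Real.exp (-(t + γ₀)))) := by
    congr 1; funext t; exact gumbelPDF_eq t
  rw [this,
    integral_add_right_eq_self (fun s : ℝ => Real.exp (-s) * Real.exp (-(1 * Real.exp (-s)))) γ₀,
    J0 one_pos]
  norm_num

lemma integrable_id_mul_gumbelPDF : Integrable (fun t : ℝ => t * gumbelPDF t) := by
  have h1 := (J1_integrable one_pos).comp_add_right γ₀
  have h2 := (J0_integrable one_pos).comp_add_right γ₀
  have := h1.sub (h2.const_mul γ₀)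
  refine this.congr (Eventually.of_forall fun t => ?_)
  simp only [Pi.sub_apply]
  rw [gumbelPDF_eq]; ring

instance : IsProbabilityMeasure gumbel := by
  constructor
  rw [gumbel, withDensity_apply _ MeasurableSet.univ, Measure.restrict_univ,
    ← ofReal_integral_eq_lintegral_ofReal integrable_gumbelPDF
      (Eventually.of_forall gumbelPDF_nonneg), integral_gumbelPDF]
  simp

instance : NullSingletonClass gumbel :=
  ⟨fun a => (withDensity_absolutelyContinuous _ _) (measure_singleton a)⟩

lemma gumbelCDF_hasDerivAt (t : ℝ) :
    HasDerivAt (fun s : ℝ => Real.exp (-Real.exp (-(s + γ₀)))) (gumbelPDF t) t := by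
  have h1 : HasDerivAt (fun s : ℝ => -(s + γ₀)) (-1) t := by
    exact ((hasDerivAt_id t).add_const γ₀).neg
  have h2 := h1.exp
  have h3 := h2.neg
  have h4 := h3.exp
  convert h4 using 1
  · rfl
  rw [gumbelPDF, Pi.neg_apply]; ring

lemma gumbelCDF_tendsto :
    Tendsto (fun s : ℝ => Real.exp (-Real.exp (-(s + γ₀)))) atBot (nhds 0) := by
  have h1 : Tendsto (fun s : ℝ => -(s + γ₀)) atBot atTop :=
    tendsto_neg_atBot_atTop.comp (tendsto_atBot_add_const_right _ γ₀ tendsto_id)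
  have h2 : Tendsto (fun s : ℝ => -Real.exp (-(s + γ₀))) atBot atBot :=
    tendsto_neg_atTop_atBot.comp (tendsto_exp_atTop.comp h1)
  exact Real.tendsto_exp_atBot.comp h2

lemma integral_Iic_gumbelPDF (b : ℝ) :
    ∫ t in Iic b, gumbelPDF t = Real.exp (-Real.exp (-(b + γ₀))) := by
  rw [integral_Iic_of_hasDerivAt_of_tendsto
    ((gumbelCDF_hasDerivAt b).continuousAt.continuousWithinAt)
    (fun x _ => gumbelCDF_hasDerivAt x) integrable_gumbelPDF.integrableOn gumbelCDF_tendsto]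
  ring

lemma gumbel_Iio (b : ℝ) :
    gumbel (Iio b) = ENNReal.ofReal (Real.exp (-Real.exp (-(b + γ₀)))) := by
  rw [gumbel, withDensity_apply _ measurableSet_Iio,
    ← ofReal_integral_eq_lintegral_ofReal integrable_gumbelPDF.integrableOn
      (Eventually.of_forall gumbelPDF_nonneg)]
  congr 1
  rw [← integral_Iic_gumbelPDF b]
  exact setIntegral_congr_set Iio_ae_eq_Iic

lemma integral_gumbel (g : ℝ → ℝ) : ∫ t, g t ∂gumbel = ∫ t, g t * gumbelPDF t := by
  have : gumbel = volume.withDensity (fun t => ((gumbelPDF t).toNNReal : ℝ≥0∞)) := rfl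
  rw [this, integral_withDensity_eq_integral_smul measurable_gumbelPDF.real_toNNReal g]
  congr 1; funext t
  rw [NNReal.smul_def, Real.coe_toNNReal _ (gumbelPDF_nonneg t), smul_eq_mul, mul_comm]

lemma integrable_gumbel_iff (g : ℝ → ℝ) :
    Integrable g gumbel ↔ Integrable (fun t => g t * gumbelPDF t) := by
  rw [gumbel, integrable_withDensity_iff measurable_gumbelPDF.ennreal_ofReal
    (Eventually.of_forall fun t => ENNReal.ofReal_lt_top)]
  constructor <;> intro h <;> refine h.congr (Eventually.of_forall fun t => ?_) <;>
    simp only [] <;> rw [ENNReal.toReal_ofReal (gumbelPDF_nonneg t)]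

lemma integrable_id_gumbel : Integrable (fun t : ℝ => t) gumbel := by
  rw [integrable_gumbel_iff]; exact integrable_id_mul_gumbelPDF

section main
variable {X : Type} [Fintype X] [Nonempty X] [DecidableEq X] (θ : X → ℝ)

/-- normalization sum relative to `x` -/
noncomputable def aval (x : X) : ℝ := ∑ y : X, Real.exp (θ y - θ x)

lemma aval_pos (x : X) : 0 < aval θ x :=
  Finset.sum_pos (fun y _ => exp_pos _) Finset.univ_nonempty

/-- product of perturbed CDFs over the other coordinates -/
noncomputable def Phi (x : X) (t : ℝ) : ℝ :=
  ∏ z : {z : X // ¬ z = x}, Real.exp (-Real.exp (-(t + (θ x - θ ↑z) + γ₀)))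

lemma aval_split (x : X) :
    aval θ x = 1 + ∑ z : {z : X // ¬ z = x}, Real.exp (θ ↑z - θ x) := by
  have h1 : ∑ z : {z : X // ¬ z = x}, Real.exp (θ ↑z - θ x)
      = ∑ z ∈ Finset.univ.erase x, Real.exp (θ z - θ x) :=
    (Finset.sum_subtype (p := fun z => ¬ z = x) (Finset.univ.erase x)
      (fun z => by simp [Finset.mem_erase]) (fun z => Real.exp (θ z - θ x))).symm
  rw [h1, aval, ← Finset.add_sum_erase Finset.univ _ (Finset.mem_univ x), sub_self, Real.exp_zero]

lemma prod_G (x : X) (t : ℝ) :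
    gumbelPDF t * Phi θ x t
      = Real.exp (-(t + γ₀)) * Real.exp (-(aval θ x * Real.exp (-(t + γ₀)))) := by
  rw [gumbelPDF, Phi, ← Real.exp_sum, mul_assoc, ← Real.exp_add]
  congr 2
  have h : ∀ z : {z : X // ¬ z = x}, -Real.exp (-(t + (θ x - θ ↑z) + γ₀))
      = (-Real.exp (θ ↑z - θ x)) * Real.exp (-(t + γ₀)) := fun z => by
    rw [neg_mul, ← Real.exp_add]; congr 2; ring
  rw [Finset.sum_congr rfl (fun z _ => h z), ← Finset.sum_mul, Finset.sum_neg_distrib,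
    aval_split θ x]
  ring

lemma oneDim (x : X) :
    ∫ t : ℝ, t * (gumbelPDF t * Phi θ x t)
      = Real.log (aval θ x) / aval θ x := by
  have ha := aval_pos θ x
  set a := aval θ x
  have h1 : (fun t : ℝ => t * (gumbelPDF t * Phi θ x t))
      = fun t : ℝ => ((t + γ₀) * (Real.exp (-(t + γ₀)) * Real.exp (-(a * Real.exp (-(t + γ₀))))))
        - γ₀ * (Real.exp (-(t + γ₀)) * Real.exp (-(a * Real.exp (-(t + γ₀))))) := by
    funext t; rw [prod_G]; ring
  rw [h1, integral_sub ((J1_integrable ha).comp_add_right γ₀)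
      (((J0_integrable ha).comp_add_right γ₀).const_mul γ₀),
    integral_add_right_eq_self (fun s : ℝ => s * (Real.exp (-s) * Real.exp (-(a * Real.exp (-s))))) γ₀,
    integral_const_mul,
    integral_add_right_eq_self (fun s : ℝ => Real.exp (-s) * Real.exp (-(a * Real.exp (-s)))) γ₀,
    J1 ha, J0 ha]
  field_simp
  ring

lemma oneDim_integrable (x : X) :
    Integrable (fun t : ℝ => t * (gumbelPDF t * Phi θ x t)) := by
  have ha := aval_pos θ x
  have := ((J1_integrable ha).comp_add_right γ₀).sub
    (((J0_integrable ha).comp_add_right γ₀).const_mul γ₀)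
  refine this.congr (Eventually.of_forall fun t => ?_)
  simp only [Pi.sub_apply]
  rw [prod_G]; ring

lemma oneDim_gumbel (x : X) :
    ∫ t, t * Phi θ x t ∂gumbel = Real.log (aval θ x) / aval θ x := by
  rw [integral_gumbel]
  rw [show (fun t => t * Phi θ x t * gumbelPDF t) = fun t => t * (gumbelPDF t * Phi θ x t) by
    funext t; ring]
  exact oneDim θ x

lemma oneDim_gumbel_integrable (x : X) :
    Integrable (fun t => t * Phi θ x t) gumbel := by
  rw [integrable_gumbel_iff]
  refine (oneDim_integrable θ x).congr (Eventually.of_forall fun t => by ring)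

end main


section main2
variable {X : Type} [Fintype X] [Nonempty X] [DecidableEq X] (θ : X → ℝ)

lemma integrable_eval_pi {ι : Type} [Fintype ι] [Unique ι] :
    Integrable (fun l : ι → ℝ => l default) (Measure.pi fun _ => gumbel) := by
  have hu := measurePreserving_piUnique (fun _ : ι => gumbel)
  exact (hu.integrable_comp aestronglyMeasurable_id).mpr integrable_id_gumbel

lemma integral_eval_pi {ι : Type} [Fintype ι] [Unique ι] (g : ℝ → ℝ) :
    ∫ l : ι → ℝ, g (l default) ∂(Measure.pi fun _ => gumbel) = ∫ t, g t ∂gumbel :=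
  (measurePreserving_piUnique (fun _ : ι => gumbel)).integral_comp
    (MeasurableEquiv.piUnique _).measurableEmbedding g

lemma tie_null (y z : X) (hyz : ¬ y = z) :
    (Measure.pi fun _ : X => gumbel) {γ : X → ℝ | θ y + γ y = θ z + γ z} = 0 := by
  classical
  have hzz : ¬ z = y := fun h => hyz h.symm
  set e := MeasurableEquiv.piEquivPiSubtypeProd (fun _ : X => ℝ) (fun i => i = y) with he
  have hmp := measurePreserving_piEquivPiSubtypeProd (fun _ : X => gumbel) (fun i => i = y)
  set B : Set (({i : X // i = y} → ℝ) × ({i : X // ¬ i = y} → ℝ)) :=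
    {q | q.2 ⟨z, hzz⟩ = q.1 ⟨y, rfl⟩ + (θ y - θ z)} with hB
  have hBm : MeasurableSet B :=
    measurableSet_eq_fun (measurable_snd.eval) ((measurable_fst.eval).add_const _)
  have hpre : {γ : X → ℝ | θ y + γ y = θ z + γ z} = e ⁻¹' B := by
    ext γ
    simp only [mem_setOf_eq, mem_preimage, he, hB,
      MeasurableEquiv.piEquivPiSubtypeProd, MeasurableEquiv.coe_mk,
      Equiv.piEquivPiSubtypeProd, Equiv.coe_fn_mk]
    constructor <;> intro h <;> linarith
  rw [hpre, hmp.measure_preimage hBm.nullMeasurableSet, Measure.prod_apply hBm]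
  have hz : ∀ l : {i : X // i = y} → ℝ,
      (Measure.pi fun _ : {i : X // ¬ i = y} => gumbel) (Prod.mk l ⁻¹' B) = 0 := by
    intro l
    have h0 : Prod.mk l ⁻¹' B
        = {r : {i : X // ¬ i = y} → ℝ | r ⟨z, hzz⟩ = l ⟨y, rfl⟩ + (θ y - θ z)} := rfl
    rw [h0]
    exact Measure.pi_hyperplane _ _ _
  rw [lintegral_congr hz, lintegral_zero]

lemma key_x (x : X) :
    Integrable ((Set.indicator {γ' : X → ℝ | ∀ y : X, ¬ y = x → θ y + γ' y < θ x + γ' x}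
        (fun γ' => γ' x))) (Measure.pi fun _ : X => gumbel) ∧
    ∫ γ : X → ℝ, Set.indicator {γ' : X → ℝ | ∀ y : X, ¬ y = x → θ y + γ' y < θ x + γ' x}
        (fun γ' => γ' x) γ ∂(Measure.pi fun _ : X => gumbel)
      = Real.log (aval θ x) / aval θ x := by
  classical
  letI : Fintype {i : X // i = x} := Subtype.fintype _
  letI : Fintype {i : X // ¬ i = x} := Subtype.fintype _
  set e := MeasurableEquiv.piEquivPiSubtypeProd (fun _ : X => ℝ) (fun i => i = x) with he
  have hmp := measurePreserving_piEquivPiSubtypeProd (fun _ : X => gumbel) (fun i => i = x)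
  set B : Set (({i : X // i = x} → ℝ) × ({i : X // ¬ i = x} → ℝ)) :=
    {q | ∀ z : {i : X // ¬ i = x}, q.2 z < q.1 ⟨x, rfl⟩ + (θ x - θ ↑z)} with hB
  have hBmeas : MeasurableSet B := by
    have hBi : B = ⋂ z : {i : X // ¬ i = x},
        {q : ({i : X // i = x} → ℝ) × ({i : X // ¬ i = x} → ℝ) |
          q.2 z < q.1 ⟨x, rfl⟩ + (θ x - θ ↑z)} := by
      ext q; simp [hB, Set.mem_iInter]
    rw [hBi]
    exact MeasurableSet.iInter fun z => measurableSet_lt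
      (measurable_snd.eval) ((measurable_fst.eval).add_const _)
  set F : (({i : X // i = x} → ℝ) × ({i : X // ¬ i = x} → ℝ)) → ℝ :=
    B.indicator (fun q => q.1 ⟨x, rfl⟩) with hF
  have hpre : ∀ γ : X → ℝ,
      Set.indicator {γ' : X → ℝ | ∀ y : X, ¬ y = x → θ y + γ' y < θ x + γ' x}
        (fun γ' => γ' x) γ = F (e γ) := by
    intro γ
    have hmem : (γ ∈ {γ' : X → ℝ | ∀ y : X, ¬ y = x → θ y + γ' y < θ x + γ' x}) ↔ e γ ∈ B := by
      simp only [mem_setOf_eq, he, hB, MeasurableEquiv.piEquivPiSubtypeProd,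
        MeasurableEquiv.coe_mk, Equiv.piEquivPiSubtypeProd, Equiv.coe_fn_mk]
      constructor
      · rintro h ⟨z, hz⟩
        have := h z hz
        dsimp
        linarith
      · intro h y hy
        have := h ⟨y, hy⟩
        dsimp at this
        linarith
    rw [hF, Set.indicator_apply, Set.indicator_apply, if_congr hmem rfl rfl]
    rfl
  have hmeasval : Measurable fun q : (({i : X // i = x} → ℝ) × ({i : X // ¬ i = x} → ℝ)) =>
      q.1 ⟨x, rfl⟩ := measurable_fst.eval
  have hdef : (⟨x, rfl⟩ : {i : X // i = x}) = default := Subsingleton.elim _ _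
  have hid : Integrable (fun l : {i : X // i = x} → ℝ => l ⟨x, rfl⟩)
      (Measure.pi fun _ : {i : X // i = x} => gumbel) := by
    have := integrable_eval_pi (ι := {i : X // i = x})
    refine this.congr (Eventually.of_forall fun l => ?_)
    rw [hdef]
  have hint1 : Integrable (fun q : (({i : X // i = x} → ℝ) × ({i : X // ¬ i = x} → ℝ)) =>
      q.1 ⟨x, rfl⟩) ((Measure.pi fun _ : {i : X // i = x} => gumbel).prod
        (Measure.pi fun _ : {i : X // ¬ i = x} => gumbel)) := by
    have := hid.mul_prod (integrable_const (1:ℝ)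
      (μ := Measure.pi fun _ : {i : X // ¬ i = x} => gumbel))
    simpa using this
  have hintF : Integrable F ((Measure.pi fun _ : {i : X // i = x} => gumbel).prod
      (Measure.pi fun _ : {i : X // ¬ i = x} => gumbel)) := by
    refine Integrable.mono' hint1.norm ((hmeasval.indicator hBmeas).aestronglyMeasurable)
      (Eventually.of_forall fun q => ?_)
    exact norm_indicator_le_norm_self _ _
  have hinner : ∀ l : {i : X // i = x} → ℝ,
      (∫ r, F (l, r) ∂(Measure.pi fun _ : {i : X // ¬ i = x} => gumbel))
        = l ⟨x, rfl⟩ * Phi θ x (l ⟨x, rfl⟩) := by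
    intro l
    have hslice : (fun r : {i : X // ¬ i = x} → ℝ => F (l, r))
        = Set.indicator (Set.pi univ fun z : {i : X // ¬ i = x} =>
            Iio (l ⟨x, rfl⟩ + (θ x - θ ↑z))) (fun _ => l ⟨x, rfl⟩) := by
      funext r
      rw [hF, Set.indicator_apply, Set.indicator_apply]
      refine if_congr ?_ rfl rfl
      simp [hB, Set.mem_pi]
    rw [hslice, integral_indicator_const _ (MeasurableSet.univ_pi fun z => measurableSet_Iio),
      measureReal_def, Measure.pi_pi]
    have hG : ∀ z : {i : X // ¬ i = x}, gumbel (Iio (l ⟨x, rfl⟩ + (θ x - θ ↑z)))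
        = ENNReal.ofReal (Real.exp (-Real.exp (-(l ⟨x, rfl⟩ + (θ x - θ ↑z) + γ₀)))) :=
      fun z => gumbel_Iio _
    rw [Finset.prod_congr rfl (fun z _ => hG z), smul_eq_mul, mul_comm]
    congr 1
    rw [ENNReal.toReal_prod, Phi]
    exact Finset.prod_congr rfl fun z _ => ENNReal.toReal_ofReal (exp_pos _).le
  have houter : ∫ l : {i : X // i = x} → ℝ, l ⟨x, rfl⟩ * Phi θ x (l ⟨x, rfl⟩)
        ∂(Measure.pi fun _ : {i : X // i = x} => gumbel)
      = ∫ t, t * Phi θ x t ∂gumbel := by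
    rw [← integral_eval_pi (ι := {i : X // i = x}) (fun t => t * Phi θ x t)]
    refine integral_congr_ae (Eventually.of_forall fun l => ?_)
    rw [hdef]
  constructor
  · have h2 := (hmp.integrable_comp hintF.aestronglyMeasurable).mpr hintF
    exact h2.congr (Eventually.of_forall fun γ => (hpre γ).symm)
  · calc ∫ γ : X → ℝ, Set.indicator {γ' : X → ℝ | ∀ y : X, ¬ y = x → θ y + γ' y < θ x + γ' x}
          (fun γ' => γ' x) γ ∂(Measure.pi fun _ : X => gumbel)
        = ∫ γ : X → ℝ, F (e γ) ∂(Measure.pi fun _ : X => gumbel) :=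
          integral_congr_ae (Eventually.of_forall fun γ => hpre γ)
      _ = ∫ q, F q ∂((Measure.pi fun _ : {i : X // i = x} => gumbel).prod
            (Measure.pi fun _ : {i : X // ¬ i = x} => gumbel)) :=
          hmp.integral_comp e.measurableEmbedding F
      _ = ∫ l : {i : X // i = x} → ℝ, l ⟨x, rfl⟩ * Phi θ x (l ⟨x, rfl⟩)
            ∂(Measure.pi fun _ : {i : X // i = x} => gumbel) := by
          rw [integral_prod F hintF]
          exact integral_congr_ae (Eventually.of_forall fun l => hinner l)
      _ = ∫ t, t * Phi θ x t ∂gumbel := houter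
      _ = Real.log (aval θ x) / aval θ x := oneDim_gumbel θ x

end main2

section main3
variable {X : Type} [Fintype X] [Nonempty X] [DecidableEq X] (θ : X → ℝ)

lemma term_eq (x : X) :
    Real.log (aval θ x) / aval θ x
      = -((Real.exp (θ x) / ∑ y : X, Real.exp (θ y)) *
          Real.log (Real.exp (θ x) / ∑ y : X, Real.exp (θ y))) := by
  have hZ : 0 < ∑ y : X, Real.exp (θ y) :=
    Finset.sum_pos (fun y _ => exp_pos _) Finset.univ_nonempty
  have ha : aval θ x = (∑ y : X, Real.exp (θ y)) / Real.exp (θ x) := by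
    rw [aval, Finset.sum_div]
    exact Finset.sum_congr rfl fun y _ => Real.exp_sub _ _
  rw [ha, Real.log_div hZ.ne' (exp_pos _).ne', Real.log_div (exp_pos _).ne' hZ.ne', Real.log_exp]
  field_simp
  ring

end main3

/-- The entropy of the Gibbs distribution equals the expected value of the
maximizing perturbation: `H(p) = E[γ(x*)]` where `x*` maximizes `θ x + γ x`. -/
theorem stmt_2 {X : Type} [Fintype X] [Nonempty X] (θ : X → ℝ)
    (xstar : (X → ℝ) → X)
    (hmax : ∀ γ : X → ℝ, ∀ x : X, θ x + γ x ≤ θ (xstar γ) + γ (xstar γ)) :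
    (-∑ x : X, (Real.exp (θ x) / ∑ y : X, Real.exp (θ y)) *
        Real.log (Real.exp (θ x) / ∑ y : X, Real.exp (θ y)))
      = ∫ γ : X → ℝ, γ (xstar γ) ∂(Measure.pi fun _ : X => gumbel) := by
  classical
  have hae : (fun γ : X → ℝ => γ (xstar γ)) =ᵐ[Measure.pi fun _ : X => gumbel]
      (fun γ : X → ℝ => ∑ x : X,
        Set.indicator {γ' : X → ℝ | ∀ y : X, ¬ y = x → θ y + γ' y < θ x + γ' x}
          (fun γ' => γ' x) γ) := by
    have hN : (Measure.pi fun _ : X => gumbel)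
        (⋃ y : X, ⋃ z : X, ⋃ _ : ¬ y = z, {γ : X → ℝ | θ y + γ y = θ z + γ z}) = 0 :=
      measure_iUnion_null fun y => measure_iUnion_null fun z =>
        measure_iUnion_null fun h => tie_null θ y z h
    rw [Filter.EventuallyEq, ae_iff]
    refine measure_mono_null (fun γ hγ => ?_) hN
    simp only [mem_setOf_eq] at hγ
    by_contra hcon
    apply hγ
    simp only [mem_iUnion, not_exists, mem_setOf_eq] at hcon
    set x0 := xstar γ with hx0
    have hS : γ ∈ {γ' : X → ℝ | ∀ y : X, ¬ y = x0 → θ y + γ' y < θ x0 + γ' x0} := by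
      intro y hy
      rcases lt_or_eq_of_le (hmax γ y) with h | h
      · exact h
      · exact absurd h (hcon y x0 hy)
    rw [Finset.sum_eq_single_of_mem x0 (Finset.mem_univ _)]
    · rw [Set.indicator_of_mem hS]
    · intro x _ hx
      refine Set.indicator_of_notMem (fun hmem => ?_) _
      have h1 := hmem x0 (fun h => hx h.symm)
      exact absurd (hmax γ x) (not_le.mpr h1)
  rw [integral_congr_ae hae, integral_finset_sum Finset.univ (fun x _ => (key_x θ x).1),
    ← Finset.sum_neg_distrib]
  refine Finset.sum_congr rfl fun x _ => ?_
  rw [(key_x θ x).2, term_eq θ x]
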